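/- With notation as above (decreasing δε data ℓ_i, j_k, T_b, and b_e defined by ℓ_{i,b_e} = 2⌊ℓ_i/2⌋), the following identity holds in the free ℤ-module on ε_1,...,ε_m, δ_1,...,δ_{2n}: r_b = r_{b_e} + Σ_{k ∈ T_b} r_{odd,b,k}, where r_b = Σ_{1≤i≤m, 1≤j≤ℓ_i} (δ_j - ε_i), r_{b_e} = Σ_{1≤i≤m, 1≤j≤ℓ_{i,b_e}} (δ_j - ε_i), and r_{odd,b,k} = (j_{2k-1} - j_{2k}) δ_{2k-1} - Σ_{i = m - j_{2k-1} + 1}^{m - j_{2k}} ε_i. -/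
import Mathlib


open Finset

/-- Basis vector `ε_i` of the free module on `ε_1,...,ε_m, δ_1,...,δ_{2n}`. -/
def epsv (m n : ℕ) (i : Fin m) : (Fin m ⊕ Fin (2 * n)) → ℤ :=
  Pi.single (Sum.inl i) 1

/-- Basis vector `δ_j`. -/
def deltav (m n : ℕ) (j : Fin (2 * n)) : (Fin m ⊕ Fin (2 * n)) → ℤ :=
  Pi.single (Sum.inr j) 1

/-- `j_k = #{i : ℓ_i ≥ k}`. -/
def jb (m : ℕ) (ℓ : Fin m → ℕ) (k : ℕ) : ℕ :=
  (univ.filter (fun i : Fin m => k ≤ ℓ i)).card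

lemma card_ge_filter (m a : ℕ) :
    (univ.filter (fun i : Fin m => a ≤ (i : ℕ))).card = m - a := by
  rw [Finset.card_filter, Fin.sum_univ_eq_sum_range (fun x => if a ≤ x then 1 else 0),
    ← Finset.card_filter]
  have h : (range m).filter (fun x => a ≤ x) = Ico (min a m) m := by
    ext x
    simp only [mem_filter, mem_range, mem_Ico]
    omega
  rw [h, Nat.card_Ico]
  omega

lemma jb_le (m : ℕ) (ℓ : Fin m → ℕ) (c : ℕ) : jb m ℓ c ≤ m := by
  unfold jb
  exact (Finset.card_filter_le _ _).trans (by simp)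

lemma jb_thresh (m : ℕ) (ℓ : Fin m → ℕ) (hmono : Monotone ℓ) (c : ℕ) (i : Fin m) :
    c ≤ ℓ i ↔ m - jb m ℓ c ≤ (i : ℕ) := by
  have hjm := jb_le m ℓ c
  have hi := i.isLt
  constructor
  · intro h
    have hsub : (univ.filter (fun i' : Fin m => (i : ℕ) ≤ (i' : ℕ))) ⊆
        univ.filter (fun i' : Fin m => c ≤ ℓ i') := by
      intro i' hi'
      simp only [mem_filter, mem_univ, true_and] at *
      exact h.trans (hmono (Fin.le_def.mpr hi'))
    have hcard := Finset.card_le_card hsub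
    rw [card_ge_filter] at hcard
    unfold jb at hjm ⊢
    omega
  · intro h
    by_contra hc
    push_neg at hc
    have hsub : (univ.filter (fun i' : Fin m => c ≤ ℓ i')) ⊆
        univ.filter (fun i' : Fin m => (i : ℕ) + 1 ≤ (i' : ℕ)) := by
      intro i' hi'
      simp only [mem_filter, mem_univ, true_and] at *
      by_contra h2
      push_neg at h2
      have : ℓ i' ≤ ℓ i := hmono (Fin.le_def.mpr (by omega))
      omega
    have hcard := Finset.card_le_card hsub
    rw [card_ge_filter] at hcard
    unfold jb at h
    omega

lemma jb_anti (m : ℕ) (ℓ : Fin m → ℕ) (c : ℕ) : jb m ℓ (c + 1) ≤ jb m ℓ c := by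
  apply Finset.card_le_card
  intro i hi
  simp only [mem_filter, mem_univ, true_and] at *
  omega

/-- `r_b = r_{b_e} + Σ_{k ∈ T_b} r_{odd,b,k}` in the free `ℤ`-module on the ε's and δ's.
Here `Fin` indices are 0-based: `k : Fin n` represents the 1-based index `k+1`, so
`δ_{2(k+1)-1}` is `deltav` at index `2k`, and the 1-based `ε`-range
`m - j_{2k-1} + 1 ≤ i ≤ m - j_{2k}` becomes `m - j_{2k-1} ≤ i < m - j_{2k}` 0-based. -/
theorem stmt15 (m n : ℕ) (ℓ : Fin m → ℕ) (hmono : Monotone ℓ) (hle : ∀ i, ℓ i ≤ 2 * n) :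
    (∑ i : Fin m, ∑ j ∈ univ.filter (fun j : Fin (2 * n) => (j : ℕ) < ℓ i),
        (deltav m n j - epsv m n i)) =
    (∑ i : Fin m, ∑ j ∈ univ.filter (fun j : Fin (2 * n) => (j : ℕ) < 2 * (ℓ i / 2)),
        (deltav m n j - epsv m n i)) +
    ∑ k ∈ univ.filter (fun k : Fin n =>
        jb m ℓ (2 * (k : ℕ) + 2) < jb m ℓ (2 * (k : ℕ) + 1)),
      (((jb m ℓ (2 * (k : ℕ) + 1) : ℤ) - (jb m ℓ (2 * (k : ℕ) + 2) : ℤ)) •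
          deltav m n ⟨2 * (k : ℕ), by have := k.isLt; omega⟩
        - ∑ i ∈ univ.filter (fun i : Fin m =>
            m - jb m ℓ (2 * (k : ℕ) + 1) ≤ (i : ℕ) ∧
              (i : ℕ) < m - jb m ℓ (2 * (k : ℕ) + 2)),
            epsv m n i) := by
  have key : ∀ i : Fin m,
      (∑ j ∈ univ.filter (fun j : Fin (2 * n) => (j : ℕ) < ℓ i),
          (deltav m n j - epsv m n i)) =
      (∑ j ∈ univ.filter (fun j : Fin (2 * n) => (j : ℕ) < 2 * (ℓ i / 2)),
          (deltav m n j - epsv m n i)) +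
      ∑ k ∈ univ.filter (fun k : Fin n => ℓ i = 2 * (k : ℕ) + 1),
        (deltav m n ⟨2 * (k : ℕ), by have := k.isLt; omega⟩ - epsv m n i) := by
    intro i
    rcases Nat.even_or_odd (ℓ i) with he | ho
    · obtain ⟨t, ht⟩ := he
      have h2 : 2 * (ℓ i / 2) = ℓ i := by omega
      rw [h2]
      have hk : univ.filter (fun k : Fin n => ℓ i = 2 * (k : ℕ) + 1) = ∅ := by
        ext k
        simp only [mem_filter, mem_univ, true_and, notMem_empty, iff_false]
        omega
      rw [hk, Finset.sum_empty, add_zero]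
    · obtain ⟨t, ht⟩ := ho
      have htn : t < n := by have := hle i; omega
      have h2 : 2 * (ℓ i / 2) = 2 * t := by omega
      have hsplit : univ.filter (fun j : Fin (2 * n) => (j : ℕ) < ℓ i)
          = insert (⟨2 * t, by omega⟩ : Fin (2 * n))
              (univ.filter (fun j : Fin (2 * n) => (j : ℕ) < 2 * (ℓ i / 2))) := by
        ext j
        simp only [mem_filter, mem_univ, true_and, mem_insert, Fin.ext_iff]
        omega
      rw [hsplit, Finset.sum_insert (by simp [h2])]
      have hk : univ.filter (fun k : Fin n => ℓ i = 2 * (k : ℕ) + 1)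
          = {(⟨t, htn⟩ : Fin n)} := by
        ext k
        simp only [mem_filter, mem_univ, true_and, mem_singleton, Fin.ext_iff]
        omega
      rw [hk, Finset.sum_singleton]
      abel
  rw [Finset.sum_congr rfl (fun i _ => key i), Finset.sum_add_distrib]
  congr 1
  have swap : (∑ i : Fin m, ∑ k ∈ univ.filter (fun k : Fin n => ℓ i = 2 * (k : ℕ) + 1),
        (deltav m n ⟨2 * (k : ℕ), by have := k.isLt; omega⟩ - epsv m n i))
      = ∑ k : Fin n, ∑ i ∈ univ.filter (fun i : Fin m => ℓ i = 2 * (k : ℕ) + 1),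
        (deltav m n ⟨2 * (k : ℕ), by have := k.isLt; omega⟩ - epsv m n i) := by
    simp_rw [Finset.sum_filter]
    exact Finset.sum_comm
  rw [swap]
  have perk : ∀ k : Fin n,
      (∑ i ∈ univ.filter (fun i : Fin m => ℓ i = 2 * (k : ℕ) + 1),
        (deltav m n ⟨2 * (k : ℕ), by have := k.isLt; omega⟩ - epsv m n i))
      = (((jb m ℓ (2 * (k : ℕ) + 1) : ℤ) - (jb m ℓ (2 * (k : ℕ) + 2) : ℤ)) •
          deltav m n ⟨2 * (k : ℕ), by have := k.isLt; omega⟩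
        - ∑ i ∈ univ.filter (fun i : Fin m =>
            m - jb m ℓ (2 * (k : ℕ) + 1) ≤ (i : ℕ) ∧
              (i : ℕ) < m - jb m ℓ (2 * (k : ℕ) + 2)),
            epsv m n i) := by
    intro k
    have hset : univ.filter (fun i : Fin m => ℓ i = 2 * (k : ℕ) + 1)
        = univ.filter (fun i : Fin m =>
            m - jb m ℓ (2 * (k : ℕ) + 1) ≤ (i : ℕ) ∧
              (i : ℕ) < m - jb m ℓ (2 * (k : ℕ) + 2)) := by
      ext i
      have h1 := jb_thresh m ℓ hmono (2 * (k : ℕ) + 1) i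
      have h2 := jb_thresh m ℓ hmono (2 * (k : ℕ) + 2) i
      simp only [mem_filter, mem_univ, true_and]
      omega
    have hcard : jb m ℓ (2 * (k : ℕ) + 1)
        = (univ.filter (fun i : Fin m => ℓ i = 2 * (k : ℕ) + 1)).card
          + jb m ℓ (2 * (k : ℕ) + 2) := by
      unfold jb
      rw [← Finset.card_union_of_disjoint (by
        simp only [Finset.disjoint_left, mem_filter, mem_univ, true_and]
        intro a ha
        omega)]
      congr 1
      ext i
      simp only [mem_filter, mem_univ, true_and, mem_union]
      omega
    rw [Finset.sum_sub_distrib, Finset.sum_const]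
    rw [← hset]
    congr 1
    have hco : ((jb m ℓ (2 * (k : ℕ) + 1) : ℤ) - (jb m ℓ (2 * (k : ℕ) + 2) : ℤ))
        = ((univ.filter (fun i : Fin m => ℓ i = 2 * (k : ℕ) + 1)).card : ℤ) := by
      omega
    rw [hco, natCast_zsmul]
  rw [Finset.sum_congr rfl (fun k _ => perk k)]
  refine (Finset.sum_filter_of_ne ?_).symm
  intro k _ hne
  by_contra hlt
  apply hne
  have hanti := jb_anti m ℓ (2 * (k : ℕ) + 1)
  rw [show 2 * (k : ℕ) + 1 + 1 = 2 * (k : ℕ) + 2 from by omega] at hanti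
  have heq : jb m ℓ (2 * (k : ℕ) + 2) = jb m ℓ (2 * (k : ℕ) + 1) := by omega
  rw [heq]
  have : univ.filter (fun i : Fin m =>
      m - jb m ℓ (2 * (k : ℕ) + 1) ≤ (i : ℕ) ∧
        (i : ℕ) < m - jb m ℓ (2 * (k : ℕ) + 1)) = ∅ := by
    ext i
    simp only [mem_filter, mem_univ, true_and, notMem_empty, iff_false]
    omega
  rw [this, Finset.sum_empty, sub_self, zero_smul, sub_zero]
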